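/- Let ε_i = (γ^{1.5}(i+1)/(1+γ)^{i+1.5})·ε/(3√(log(1/δ))) for i ≥ 0, where γ ∈ (0,1), ε ∈ (0,1), and δ ∈ (0, e^{-1}). Then Σ_{i=0}^∞ ε_i² ≤ 2ε²/(9 log(1/δ)), and hence (1/2)Σ_{i=0}^∞ ε_i² + √(2(Σ_{i=0}^∞ ε_i²)·log(1/δ)) ≤ ε. -/

import Mathlib

open Real

lemma key_ineq (γ : ℝ) (h0 : 0 < γ) (h1 : γ < 1) :
    γ ^ 3 / (1 + γ) ^ 3 *
      (2 * (1 / (1 - ((1 + γ) ^ 2)⁻¹) ^ 3) - 1 / (1 - ((1 + γ) ^ 2)⁻¹) ^ 2) ≤ 2 := by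
  have ha : (0:ℝ) < 1 + γ := by linarith
  have h1x : 1 - ((1 + γ) ^ 2)⁻¹ = γ * (2 + γ) / (1 + γ) ^ 2 := by
    field_simp; ring
  rw [h1x]
  have hpos : (0:ℝ) < γ * (2 + γ) := by nlinarith
  have key : γ ^ 3 / (1 + γ) ^ 3 *
      (2 * (1 / (γ * (2 + γ) / (1 + γ) ^ 2) ^ 3) - 1 / (γ * (2 + γ) / (1 + γ) ^ 2) ^ 2)
      = 2 * (1+γ)^3/(2+γ)^3 - γ * (1+γ)/(2+γ)^2 := by
    field_simp
  rw [key]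
  rw [div_sub_div _ _ (by positivity) (by positivity), div_le_iff₀ (by positivity)]
  nlinarith [sq_nonneg γ, sq_nonneg (1+γ), h0.le, pow_pos ha 3]

/-- With `ε_i = γ^{1.5}(i+1)/(1+γ)^{i+1.5} · ε/(3√(log(1/δ)))` for
`γ ∈ (0,1)`, `ε ∈ (0,1)`, `δ ∈ (0, e⁻¹)`, we have `∑ ε_i² ≤ 2ε²/(9 log(1/δ))`, and
hence `(1/2)∑ ε_i² + √(2(∑ ε_i²)·log(1/δ)) ≤ ε`. -/
theorem cdp_composition_fixed_scheduler (γ ε δ : ℝ)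
    (hγ0 : 0 < γ) (hγ1 : γ < 1) (hε0 : 0 < ε) (hε1 : ε < 1)
    (hδ0 : 0 < δ) (hδ1 : δ < Real.exp (-1)) :
    (∑' i : ℕ, (γ ^ (1.5 : ℝ) * ((i : ℝ) + 1) / (1 + γ) ^ ((i : ℝ) + 1.5) *
        (ε / (3 * Real.sqrt (Real.log (1 / δ))))) ^ 2)
      ≤ 2 * ε ^ 2 / (9 * Real.log (1 / δ)) ∧
    (1 / 2) * (∑' i : ℕ, (γ ^ (1.5 : ℝ) * ((i : ℝ) + 1) / (1 + γ) ^ ((i : ℝ) + 1.5) *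
        (ε / (3 * Real.sqrt (Real.log (1 / δ))))) ^ 2)
      + Real.sqrt (2 * (∑' i : ℕ, (γ ^ (1.5 : ℝ) * ((i : ℝ) + 1) / (1 + γ) ^ ((i : ℝ) + 1.5) *
          (ε / (3 * Real.sqrt (Real.log (1 / δ))))) ^ 2) * Real.log (1 / δ)) ≤ ε := by
  have hL : 1 < Real.log (1 / δ) := by
    have h := Real.log_lt_log hδ0 hδ1
    rw [Real.log_exp] at h
    rw [one_div, Real.log_inv]
    linarith
  set L := Real.log (1 / δ) with hLdef
  have hLpos : 0 < L := by linarith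
  set c := ε / (3 * Real.sqrt L) with hc
  have hsL : 0 < Real.sqrt L := Real.sqrt_pos.2 hLpos
  have hcpos : 0 < c := by rw [hc]; positivity
  have hc2 : c ^ 2 = ε ^ 2 / (9 * L) := by
    rw [hc, div_pow, mul_pow, Real.sq_sqrt hLpos.le]; norm_num
  have ha : (0:ℝ) < 1 + γ := by linarith
  have ha1 : (1:ℝ) < 1 + γ := by linarith
  set a := 1 + γ with hadef
  set x : ℝ := (a ^ 2)⁻¹ with hx
  have hxpos : 0 < x := by rw [hx]; positivity
  have hxlt : x < 1 := by
    rw [hx, inv_lt_one_iff₀]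
    right; nlinarith
  have hxnorm : ‖x‖ < 1 := by rw [Real.norm_eq_abs, abs_of_pos hxpos]; exact hxlt
  -- sums of choose * geometric
  have h2 : HasSum (fun n : ℕ ↦ ((n + 2).choose 2 : ℝ) * x ^ n) (1 / (1 - x) ^ 3) :=
    hasSum_choose_mul_geometric_of_norm_lt_one 2 hxnorm
  have h1 : HasSum (fun n : ℕ ↦ ((n + 1).choose 1 : ℝ) * x ^ n) (1 / (1 - x) ^ 2) :=
    hasSum_choose_mul_geometric_of_norm_lt_one 1 hxnorm
  have hsq : HasSum (fun n : ℕ ↦ ((n : ℝ) + 1) ^ 2 * x ^ n)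
      (2 * (1 / (1 - x) ^ 3) - 1 / (1 - x) ^ 2) := by
    have h := (h2.mul_left 2).sub h1
    convert h using 2 with n
    · rfl
    have hch : ((n + 2).choose 2 : ℝ) = ((n : ℝ) + 1) * ((n : ℝ) + 2) / 2 := by
      have hd : 2 ∣ (n + 1) * (n + 2) := (Nat.even_mul_succ_self (n + 1)).two_dvd
      have : (n + 2).choose 2 = (n + 1) * (n + 2) / 2 := by
        rw [Nat.choose_two_right]
        congr 1
        simp [Nat.add_sub_cancel]
        ring
      rw [this, Nat.cast_div hd (by norm_num)]
      push_cast
      ring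
    rw [hch, Nat.choose_one_right]
    push_cast
    ring
  set C := γ ^ 3 * c ^ 2 / a ^ 3 with hC
  clear_value L c a x C
  have hterm : ∀ n : ℕ,
      (γ ^ (1.5 : ℝ) * ((n : ℝ) + 1) / a ^ ((n : ℝ) + 1.5) * c) ^ 2
        = C * (((n : ℝ) + 1) ^ 2 * x ^ n) := by
    intro n
    have hg : γ ^ (1.5 : ℝ) = γ * Real.sqrt γ := by
      rw [show (1.5 : ℝ) = 1 + 1 / 2 by norm_num, Real.rpow_add hγ0, Real.rpow_one,
        ← Real.sqrt_eq_rpow]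
    have han : a ^ ((n : ℝ) + 1.5) = a ^ n * (a * Real.sqrt a) := by
      rw [show (n : ℝ) + 1.5 = (n : ℝ) + (1 + 1 / 2) by norm_num, Real.rpow_add ha,
        Real.rpow_natCast, Real.rpow_add ha, Real.rpow_one, ← Real.sqrt_eq_rpow]
    rw [hg, han, hC, hx]
    have hsg : Real.sqrt γ ^ 2 = γ := Real.sq_sqrt hγ0.le
    have hsa : Real.sqrt a ^ 2 = a := Real.sq_sqrt ha.le
    have hapow : (0:ℝ) < a ^ n := pow_pos ha n
    have hsapos : 0 < Real.sqrt a := Real.sqrt_pos.2 ha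
    rw [inv_pow, ← pow_mul]
    field_simp
    rw [hsg, hsa]
    ring
  have hS : HasSum
      (fun n : ℕ ↦ (γ ^ (1.5 : ℝ) * ((n : ℝ) + 1) / a ^ ((n : ℝ) + 1.5) * c) ^ 2)
      (C * (2 * (1 / (1 - x) ^ 3) - 1 / (1 - x) ^ 2)) := by
    have h := hsq.mul_left C
    convert h using 2 with n
    · rfl
    exact hterm n
  rw [hS.tsum_eq]
  have hV0 : 0 ≤ C * (2 * (1 / (1 - x) ^ 3) - 1 / (1 - x) ^ 2) :=
    hS.tsum_eq ▸ tsum_nonneg fun i ↦ sq_nonneg _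
  have hV1 : C * (2 * (1 / (1 - x) ^ 3) - 1 / (1 - x) ^ 2) ≤ 2 * ε ^ 2 / (9 * L) := by
    have hk := key_ineq γ hγ0 hγ1
    rw [← hadef] at hk
    rw [← hx] at hk
    have : C * (2 * (1 / (1 - x) ^ 3) - 1 / (1 - x) ^ 2)
        = c ^ 2 * (γ ^ 3 / a ^ 3 * (2 * (1 / (1 - x) ^ 3) - 1 / (1 - x) ^ 2)) := by
      rw [hC]; ring
    rw [this]
    have h2c : 2 * ε ^ 2 / (9 * L) = c ^ 2 * 2 := by rw [hc2]; ring
    rw [h2c]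
    exact mul_le_mul_of_nonneg_left hk (sq_nonneg c)
  refine ⟨hV1, ?_⟩
  generalize hVg : C * (2 * (1 / (1 - x) ^ 3) - 1 / (1 - x) ^ 2) = V at hV0 hV1 ⊢
  have hsqrt : Real.sqrt (2 * V * L) ≤ 2 * ε / 3 := by
    have h2VL : 2 * V * L ≤ (2 * ε / 3) ^ 2 := by
      have hmul := mul_le_mul_of_nonneg_left hV1 (by positivity : (0:ℝ) ≤ 2 * L)
      have h2 : 2 * L * (2 * ε ^ 2 / (9 * L)) = (2 * ε / 3) ^ 2 := by
        field_simp; ring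
      nlinarith [hmul]
      
    calc Real.sqrt (2 * V * L) ≤ Real.sqrt ((2 * ε / 3) ^ 2) := Real.sqrt_le_sqrt h2VL
      _ = 2 * ε / 3 := Real.sqrt_sq (by positivity)
  have hhalf : (1 / 2) * V ≤ ε / 9 := by
    have h3 : ε ^ 2 / (9 * L) ≤ ε / 9 := by
      rw [div_le_div_iff₀ (by linarith) (by norm_num)]
      nlinarith
    have hV1' : V ≤ 2 * (ε ^ 2 / (9 * L)) := by rw [mul_div_assoc] at hV1; exact hV1
    linarith [hV1', h3]
  linarith
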